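/- Let h ≥ 1 be an integer and let n = 2k where k ≥ 1 is an odd integer. If the cyclotomic polynomial Φ_n(t) divides p_h(t) = t^{4h} − t^{4h−1} + t^{2h} − t + 1 in ℤ[t], then n divides 2h − 2 or n divides 6h − 2. -/

import Mathlib

open Polynomial Complex

private lemma relE_aux (h n : ℕ) (hh : 1 ≤ h) (hnpos : 0 < n)
    (hdvd : cyclotomic n ℤ ∣
      (X : ℤ[X]) ^ (4 * h) - X ^ (4 * h - 1) + X ^ (2 * h) - X + 1)
    (z : ℂ) (hz : IsPrimitiveRoot z n) :
    (z ^ (2 * h)) ^ 2 + z ^ (2 * h) + 1 = z ^ (2 * h) * z ^ (2 * h - 1) + z := by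
  have hroot : (Polynomial.aeval z)
      ((X : ℤ[X]) ^ (4 * h) - X ^ (4 * h - 1) + X ^ (2 * h) - X + 1) = 0 := by
    obtain ⟨q, hq⟩ := hdvd
    rw [hq, map_mul]
    have h0 : (Polynomial.aeval z) (cyclotomic n ℤ) = 0 := by
      have hc : (cyclotomic n ℂ).IsRoot z := hz.isRoot_cyclotomic hnpos
      have heq : Polynomial.aeval z (cyclotomic n ℤ)
          = Polynomial.eval z (cyclotomic n ℂ) := by
        rw [← map_cyclotomic_int n ℂ, Polynomial.aeval_def, Polynomial.eval_map,
          algebraMap_int_eq]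
      rw [heq]
      exact hc
    rw [h0, zero_mul]
  simp only [map_add, map_sub, map_pow, map_one, Polynomial.aeval_X] at hroot
  have h1 : z ^ (4 * h) = (z ^ (2 * h)) ^ 2 := by
    rw [← pow_mul]; congr 1; ring
  have h2 : z ^ (4 * h - 1) = z ^ (2 * h) * z ^ (2 * h - 1) := by
    rw [← pow_add]; congr 1; omega
  rw [h1, h2] at hroot
  linear_combination hroot

theorem stmt_6 (h : ℕ) (hh : 1 ≤ h) (k : ℕ) (hk : 1 ≤ k) (hkodd : Odd k)
    (n : ℕ) (hn : n = 2 * k)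
    (hdvd : cyclotomic n ℤ ∣
      (X : ℤ[X]) ^ (4 * h) - X ^ (4 * h - 1) + X ^ (2 * h) - X + 1) :
    n ∣ 2 * h - 2 ∨ n ∣ 6 * h - 2 := by
  have hk2 : k % 2 = 1 := Nat.odd_iff.mp hkodd
  have hnpos : 0 < n := by omega
  obtain ⟨ζ, hζdef⟩ : ∃ ζ : ℂ, ζ = Complex.exp (2 * Real.pi * I / n) := ⟨_, rfl⟩
  have hζ : IsPrimitiveRoot ζ n := hζdef ▸ Complex.isPrimitiveRoot_exp n (by omega)
  have hζeq : ζ = Complex.exp ((2 * Real.pi / n : ℝ) * I) := by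
    rw [hζdef]; congr 1; push_cast; ring
  have habsζ : ‖ζ‖ = 1 := by
    rw [hζeq]; exact Complex.norm_exp_ofReal_mul_I _
  obtain ⟨u, hudef⟩ : ∃ u : ℂ, u = ζ ^ (2 * h) := ⟨_, rfl⟩
  obtain ⟨v, hvdef⟩ : ∃ v : ℂ, v = ζ ^ (2 * h - 1) := ⟨_, rfl⟩
  obtain ⟨d, hddef⟩ : ∃ d : ℕ, d = orderOf u := ⟨_, rfl⟩
  have hE1 : u ^ 2 + u + 1 = u * v + ζ := by
    rw [hudef, hvdef]; exact relE_aux h n hh hnpos hdvd ζ hζ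
  have hzv : ζ * v = u := by
    rw [hudef, hvdef, ← pow_succ']
    congr 1; omega
  have hukpow : u ^ k = 1 := by
    rw [hudef, ← pow_mul]
    have he : 2 * h * k = n * h := by rw [hn]; ring
    rw [he, pow_mul, hζ.pow_eq_one, one_pow]
  have hdk : d ∣ k := hddef ▸ orderOf_dvd_of_pow_eq_one hukpow
  have hdodd : d % 2 = 1 := by
    have h2 : ¬ (2 ∣ d) := by
      intro h2d
      have := h2d.trans hdk
      omega
    omega
  have hu_prim : IsPrimitiveRoot u d := hddef ▸ IsPrimitiveRoot.orderOf u
  have hcase : d = 1 ∨ d = 3 ∨ d = 5 ∨ 7 ≤ d := by omega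
  have habsv : ‖v‖ = 1 := by
    rw [hvdef, norm_pow, habsζ, one_pow]
  rcases hcase with hd1 | hd3 | hd5 | hd7
  · -- d = 1 : u = 1, 3 = v + ζ, contradiction by abs
    exfalso
    have hu1 : u = 1 := orderOf_eq_one_iff.mp (by rw [← hddef]; exact hd1)
    have hE1' : (3 : ℂ) = v + ζ := by rw [hu1] at hE1; linear_combination hE1
    have hle : (3 : ℝ) ≤ 2 := by
      calc (3 : ℝ) = ‖(3 : ℂ)‖ := by norm_num
        _ = ‖v + ζ‖ := by rw [hE1']
        _ ≤ ‖v‖ + ‖ζ‖ := norm_add_le _ _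
        _ = 2 := by rw [habsv, habsζ]; norm_num
    linarith
  · -- d = 3
    exfalso
    have horder : orderOf u = 3 := hddef ▸ hd3
    have hu3 : u ^ 3 = 1 := by rw [← horder]; exact pow_orderOf_eq_one u
    have hune : u ≠ 1 := by
      intro h1; rw [h1, orderOf_one] at horder; omega
    have hsum3 : u ^ 2 + u + 1 = 0 := by
      have hfac : (u - 1) * (u ^ 2 + u + 1) = 0 := by linear_combination hu3
      rcases mul_eq_zero.mp hfac with hc | hc
      · exact absurd (sub_eq_zero.mp hc) hune
      · exact hc
    have huvz : u * v + ζ = 0 := by linear_combination hsum3 - hE1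
    have hζne : ζ ≠ 0 := hζ.ne_zero (by omega)
    have hfac2 : ζ * (v ^ 2 + 1) = 0 := by linear_combination v * hzv + huvz
    have hv2 : v ^ 2 = -1 := by
      rcases mul_eq_zero.mp hfac2 with hc | hc
      · exact absurd hc hζne
      · linear_combination hc
    have hζ2k : ζ ^ (2 * k) = 1 := by rw [← hn]; exact hζ.pow_eq_one
    have hvk1 : v ^ (2 * k) = 1 := by
      rw [hvdef, ← pow_mul]
      have : (2 * h - 1) * (2 * k) = 2 * k * (2 * h - 1) := by ring
      rw [this, pow_mul, hζ2k, one_pow]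
    have hvk2 : v ^ (2 * k) = -1 := by
      have hm : v ^ (2 * k) = (v ^ 2) ^ k := by rw [← pow_mul]
      rw [hm, hv2]
      exact hkodd.neg_one_pow
    rw [hvk1] at hvk2
    norm_num at hvk2
  · -- d = 5 : main case
    have horder : orderOf u = 5 := hddef ▸ hd5
    have hu5 : u ^ 5 = 1 := by rw [← horder]; exact pow_orderOf_eq_one u
    have hune : u ≠ 1 := by
      intro h1; rw [h1, orderOf_one] at horder; omega
    have hsum5 : u ^ 4 + u ^ 3 + u ^ 2 + u + 1 = 0 := by
      have hfac : (u - 1) * (u ^ 4 + u ^ 3 + u ^ 2 + u + 1) = 0 := by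
        linear_combination hu5
      rcases mul_eq_zero.mp hfac with hc | hc
      · exact absurd (sub_eq_zero.mp hc) hune
      · exact hc
    obtain ⟨y, hy_def⟩ : ∃ y : ℂ, y = u ^ 4 + u + 1 := ⟨_, rfl⟩
    have hy : y ^ 2 = y + 1 := by
      rw [hy_def]; linear_combination hsum5 + (u ^ 3 + 2) * hu5
    have hune0 : u ≠ 0 := by
      intro h0; rw [h0] at hu5; norm_num at hu5
    have huw : u * (v ^ 2 - y * v + 1) = 0 := by
      rw [hy_def]
      linear_combination (-v) * hE1 + (-v) * hu5 + (-1 : ℂ) * hzv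
    have hv2 : v ^ 2 = y * v - 1 := by
      rcases mul_eq_zero.mp huw with hc | hc
      · exact absurd hc hune0
      · linear_combination hc
    have hv3 : v ^ 3 = y * v - y := by
      linear_combination (v + y) * hv2 + v * hy
    have hv5 : v ^ 5 = -1 := by
      linear_combination (v ^ 2 + y) * hv3 + (-y) * hv2 + (-1 : ℂ) * hy
    have he1 : ζ ^ 5 * v ^ 5 = 1 := by rw [← mul_pow, hzv, hu5]
    have hz5 : ζ ^ 5 = -1 := by
      linear_combination (-1 : ℂ) * he1 + ζ ^ 5 * hv5
    have hz10 : ζ ^ 10 = 1 := by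
      rw [show (10 : ℕ) = 5 * 2 by norm_num, pow_mul, hz5]
      norm_num
    have hn10 : n ∣ 10 := hζ.dvd_of_pow_eq_one 10 hz10
    have hnle : n ≤ 10 := Nat.le_of_dvd (by norm_num) hn10
    have hncase : n = 2 ∨ n = 10 := by
      interval_cases n <;> omega
    rcases hncase with hc2 | hc10
    · exfalso
      have hζ2 : ζ ^ 2 = 1 := by rw [← hc2]; exact hζ.pow_eq_one
      exact hune (by rw [hudef, pow_mul, hζ2, one_pow])
    · -- n = 10
      subst hc10
      have hk5 : k = 5 := by omega
      have hh5 : h % 5 ≠ 0 := by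
        intro h0
        apply hune
        rw [hudef, show 2 * h = 10 * (h / 5) by omega, pow_mul, hz10, one_pow]
      have hζexp : ζ = Complex.exp ((Real.pi / 5 : ℝ) * I) := by
        have harg : (2 * Real.pi / ((10 : ℕ) : ℝ)) = Real.pi / 5 := by
          push_cast; ring
        rw [hζeq, harg]
      have him : ∀ (s : ℕ) (t : ℝ), (s : ℝ) * (Real.pi / 5) = t → (ζ ^ s).im = Real.sin t := by
        intro s t ht
        rw [hζexp, ← Complex.exp_nat_mul,
          show ((s : ℂ) * (((Real.pi / 5 : ℝ) : ℂ) * I))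
            = ((t : ℝ) : ℂ) * I by rw [← ht]; push_cast; ring]
        exact Complex.exp_ofReal_mul_I_im _
      have hrcase : h % 5 = 1 ∨ h % 5 = 2 ∨ h % 5 = 3 ∨ h % 5 = 4 := by omega
      have hspos : 0 < Real.sin (Real.pi / 5) :=
        Real.sin_pos_of_pos_of_lt_pi (by positivity) (by linarith [Real.pi_pos])
      rcases hrcase with hr | hr | hr | hr
      · left; omega
      · right; omega
      · -- h ≡ 3 mod 5 : contradiction
        exfalso
        have hu6 : u = ζ ^ 6 := by
          rw [hudef, show 2 * h = 10 * (h / 5) + 6 by omega, pow_add, pow_mul,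
            hz10, one_pow, one_mul]
        have hv5' : v = ζ ^ 5 := by
          rw [hvdef, show 2 * h - 1 = 10 * (h / 5) + 5 by omega, pow_add, pow_mul,
            hz10, one_pow, one_mul]
        rw [hu6, hv5'] at hE1
        have hE2 : ζ ^ 2 + ζ ^ 6 + 1 = ζ ^ 1 + ζ ^ 1 := by
          rw [pow_one]
          linear_combination hE1 + (ζ - ζ ^ 2) * hz10
        have hIm := congrArg Complex.im hE2
        simp only [Complex.add_im, Complex.one_im] at hIm
        rw [him 2 (2 * (Real.pi / 5)) (by push_cast; ring),
          him 6 (6 * (Real.pi / 5)) (by push_cast; ring),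
          him 1 (Real.pi / 5) (by push_cast; ring)] at hIm
        have hs6 : Real.sin (6 * (Real.pi / 5)) = -Real.sin (Real.pi / 5) := by
          rw [show (6 : ℝ) * (Real.pi / 5) = Real.pi + Real.pi / 5 by ring]
          simp [Real.sin_add]
        have hs2 : Real.sin (2 * (Real.pi / 5))
            = 2 * Real.sin (Real.pi / 5) * Real.cos (Real.pi / 5) :=
          Real.sin_two_mul _
        have hcle : Real.cos (Real.pi / 5) ≤ 1 := Real.cos_le_one _
        rw [hs6, hs2] at hIm
        nlinarith [hIm, hspos, hcle]
      · -- h ≡ 4 mod 5 : contradiction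
        exfalso
        have hu8 : u = ζ ^ 8 := by
          rw [hudef, show 2 * h = 10 * (h / 5) + 8 by omega, pow_add, pow_mul,
            hz10, one_pow, one_mul]
        have hv7 : v = ζ ^ 7 := by
          rw [hvdef, show 2 * h - 1 = 10 * (h / 5) + 7 by omega, pow_add, pow_mul,
            hz10, one_pow, one_mul]
        rw [hu8, hv7] at hE1
        have hE2 : ζ ^ 6 + ζ ^ 8 + 1 = ζ ^ 5 + ζ ^ 1 := by
          rw [pow_one]
          linear_combination hE1 + (ζ ^ 5 - ζ ^ 6) * hz10
        have hIm := congrArg Complex.im hE2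
        simp only [Complex.add_im, Complex.one_im] at hIm
        rw [him 6 (6 * (Real.pi / 5)) (by push_cast; ring),
          him 8 (8 * (Real.pi / 5)) (by push_cast; ring),
          him 5 (5 * (Real.pi / 5)) (by push_cast; ring),
          him 1 (Real.pi / 5) (by push_cast; ring)] at hIm
        have hs6 : Real.sin (6 * (Real.pi / 5)) = -Real.sin (Real.pi / 5) := by
          rw [show (6 : ℝ) * (Real.pi / 5) = Real.pi + Real.pi / 5 by ring]
          simp [Real.sin_add]
        have hs8 : Real.sin (8 * (Real.pi / 5)) = -Real.sin (3 * (Real.pi / 5)) := by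
          rw [show (8 : ℝ) * (Real.pi / 5) = Real.pi + 3 * (Real.pi / 5) by ring]
          simp [Real.sin_add]
        have hs5 : Real.sin (5 * (Real.pi / 5)) = 0 := by
          rw [show (5 : ℝ) * (Real.pi / 5) = Real.pi by ring]
          exact Real.sin_pi
        have hs3pos : 0 < Real.sin (3 * (Real.pi / 5)) :=
          Real.sin_pos_of_pos_of_lt_pi (by positivity) (by linarith [Real.pi_pos])
        rw [hs6, hs8, hs5] at hIm
        linarith [hIm, hspos, hs3pos]
  · -- d ≥ 7 : contradiction
    exfalso
    have hdn : d ∣ n := by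
      rw [hddef]
      apply orderOf_dvd_of_pow_eq_one
      rw [hudef, ← pow_mul, mul_comm, pow_mul, hζ.pow_eq_one, one_pow]
    haveI : NeZero d := ⟨by omega⟩
    obtain ⟨θ, hθdef⟩ : ∃ θ : ℝ, θ = 2 * Real.pi / d := ⟨_, rfl⟩
    obtain ⟨e, hedef⟩ : ∃ e : ℂ, e = Complex.exp ((θ : ℝ) * I) := ⟨_, rfl⟩
    have he_prim : IsPrimitiveRoot e d := by
      have hp := Complex.isPrimitiveRoot_exp d (by omega)
      have : Complex.exp (2 * Real.pi * I / d) = e := by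
        rw [hedef, hθdef]; congr 1; push_cast; ring
      rwa [this] at hp
    have habse : ‖e‖ = 1 := by
      rw [hedef]; exact Complex.norm_exp_ofReal_mul_I _
    obtain ⟨i, hi_lt, hie⟩ := he_prim.eq_pow_of_pow_eq_one
      (hddef ▸ pow_orderOf_eq_one u)
    have hci : Nat.Coprime i d := by
      rw [← hie] at hu_prim
      exact (he_prim.pow_iff_coprime (by omega) i).mp hu_prim
    obtain ⟨m, -, hm⟩ := Nat.exists_mul_mod_eq_one_of_coprime hci (by omega)
    have hmd : Nat.Coprime m d := by
      have hg : Nat.gcd m d ∣ 1 := by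
        rw [← hm]
        exact (Nat.dvd_mod_iff (Nat.gcd_dvd_right m d)).mpr
          ((Nat.gcd_dvd_left m d).mul_left i)
      exact Nat.dvd_one.mp hg
    have hmod : (i * m) % d = 1 % d := by
      rw [hm, Nat.mod_eq_of_lt (show (1 : ℕ) < d by omega)]
    haveI : NeZero n := ⟨by omega⟩
    obtain ⟨U, hU⟩ := ZMod.unitsMap_surjective hdn (ZMod.unitOfCoprime m hmd)
    obtain ⟨j, hjdef⟩ : ∃ j : ℕ, j = ((U : ZMod n)).val := ⟨_, rfl⟩
    have hj_cop : Nat.Coprime j n := hjdef ▸ ZMod.val_coe_unit_coprime U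
    have hjm : j ≡ m [MOD d] := by
      have h2 : (ZMod.castHom hdn (ZMod d)) ((U : ZMod n)) = ((m : ZMod d)) := by
        rw [← ZMod.coe_unitOfCoprime m hmd, ← hU, ZMod.unitsMap_def]
        rfl
      have h3 : ((j : ℕ) : ZMod d) = ((m : ℕ) : ZMod d) := by
        rw [hjdef, ZMod.natCast_val, ← ZMod.castHom_apply (h := hdn), h2]
      exact (ZMod.natCast_eq_natCast_iff _ _ _).mp h3
    have hij : i * j ≡ 1 [MOD d] := (hjm.mul_left i).trans hmod
    have hijmod : (i * j) % d = 1 := by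
      have h1 : (i * j) % d = 1 % d := hij
      rwa [Nat.mod_eq_of_lt (show (1 : ℕ) < d by omega)] at h1
    have hue : u ^ j = e := by
      have hed : e ^ d = 1 := he_prim.pow_eq_one
      rw [← hie, ← pow_mul, ← Nat.div_add_mod (i * j) d, pow_add, pow_mul, hed,
        one_pow, one_mul, hijmod, pow_one]
    obtain ⟨z, hzdef⟩ : ∃ z : ℂ, z = ζ ^ j := ⟨_, rfl⟩
    have hz_prim : IsPrimitiveRoot z n := hzdef ▸ hζ.pow_of_coprime j hj_cop
    have habsz : ‖z‖ = 1 := by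
      rw [hzdef, norm_pow, habsζ, one_pow]
    have hEz := relE_aux h n hh hnpos hdvd z hz_prim
    have hzu : z ^ (2 * h) = e := by
      rw [hzdef, pow_right_comm, ← hudef, hue]
    rw [hzu] at hEz
    -- hEz : e ^ 2 + e + 1 = e * z ^ (2 * h - 1) + z
    have hb : ‖e ^ 2 + e + 1‖ ≤ 2 := by
      calc ‖e ^ 2 + e + 1‖ = ‖e * z ^ (2 * h - 1) + z‖ := by
            rw [hEz]
        _ ≤ ‖e * z ^ (2 * h - 1)‖ + ‖z‖ := norm_add_le _ _
        _ = ‖e‖ * (‖z‖) ^ (2 * h - 1) + ‖z‖ := by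
            rw [norm_mul, norm_pow]
        _ = 2 := by rw [habse, habsz]; norm_num
    obtain ⟨c, hcdef⟩ : ∃ c : ℝ, c = Real.cos θ := ⟨_, rfl⟩
    obtain ⟨sn, hsdef⟩ : ∃ sn : ℝ, sn = Real.sin θ := ⟨_, rfl⟩
    have he_eq : e = (c : ℂ) + (sn : ℂ) * I := by
      rw [hedef, hcdef, hsdef, Complex.exp_mul_I, Complex.ofReal_cos, Complex.ofReal_sin]
    have pythC : (sn : ℂ) ^ 2 + (c : ℂ) ^ 2 = 1 := by
      have hp : sn ^ 2 + c ^ 2 = 1 := by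
        rw [hsdef, hcdef]; exact Real.sin_sq_add_cos_sq θ
      have := congrArg (fun x : ℝ => (x : ℂ)) hp
      push_cast at this
      exact this
    have hd7' : (7 : ℝ) ≤ (d : ℝ) := by exact_mod_cast hd7
    have hθpos : 0 < θ := by
      rw [hθdef]; positivity
    have hθlt : θ < Real.pi / 3 := by
      have h1 : θ ≤ 2 * Real.pi / 7 := by
        rw [hθdef, div_le_div_iff₀ (by positivity) (by norm_num)]
        nlinarith [Real.pi_pos, hd7']
      linarith [Real.pi_pos]
    have hcgt : 1 / 2 < c := by
      have h1 : Real.cos (Real.pi / 3) < Real.cos θ :=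
        Real.cos_lt_cos_of_nonneg_of_le_pi (le_of_lt hθpos)
          (by linarith [Real.pi_pos]) hθlt
      rw [Real.cos_pi_div_three] at h1
      rw [hcdef]
      linarith
    have hid : e ^ 2 + e + 1 = ((2 * c + 1 : ℝ) : ℂ) * e := by
      rw [he_eq]
      push_cast
      linear_combination ((sn : ℂ)) ^ 2 * Complex.I_sq - pythC
    have heq2 : ‖e ^ 2 + e + 1‖ = 2 * c + 1 := by
      rw [hid, norm_mul, habse, mul_one, Complex.norm_real, Real.norm_eq_abs, abs_of_pos (by linarith)]
    rw [heq2] at hb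
    linarith
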